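/- The partial derivative of the mean weighted first passage time matrix M with respect to the weight entry W(l,k) is P(l,k)·[Z e_l 1^T - 11^T [Z e_l 1^T]_dg + π(l)(I - Z + 11^T[Z]_dg)Ξ^{-1}], where e_l is the l-th standard basis vector. -/

import Mathlib

open BigOperators Matrix

/-- The partial derivative of the closed-form mean weighted first-passage-time
matrix `M(W)` with respect to the entry `W(l,k)` is
`P(l,k) [Z e_l 1ᵀ - 11ᵀ[Z e_l 1ᵀ]_dg + π(l)(I - Z + 11ᵀ[Z]_dg) Ξ⁻¹]`, stated entrywise as a
directional derivative along the basis matrix `e_l e_kᵀ`. -/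
theorem stmt_12 {n : ℕ} (P Z : Matrix (Fin n) (Fin n) ℝ) (pv : Fin n → ℝ)
    (hP0 : ∀ i j, 0 ≤ P i j) (hProw : ∀ i, ∑ j, P i j = 1)
    (hirr : ∀ i j, ∃ k : ℕ, 0 < (P ^ k) i j)
    (hpiP : Matrix.vecMul pv P = pv) (hpi1 : ∑ i, pv i = 1) (hpipos : ∀ i, 0 < pv i)
    (hZl : (1 - P + Matrix.of (fun _ j => pv j)) * Z = 1)
    (hZr : Z * (1 - P + Matrix.of (fun _ j => pv j)) = 1)
    (Mfun : Matrix (Fin n) (Fin n) ℝ → Matrix (Fin n) (Fin n) ℝ)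
    (hMfun : ∀ W A, A = Z * Matrix.hadamard P W * Matrix.of (fun _ j => pv j) →
        Mfun W =
          (A - Matrix.of (fun _ _ => (1 : ℝ)) * Matrix.diagonal (fun i => A i i) +
              (∑ a, ∑ b, pv a * (P a b * W a b)) •
                (1 - Z +
                  Matrix.of (fun _ _ => (1 : ℝ)) * Matrix.diagonal (fun i => Z i i))) *
            Matrix.diagonal (fun i => (pv i)⁻¹)) :
    ∀ (W : Matrix (Fin n) (Fin n) ℝ) (l k i j : Fin n),
      HasDerivAt (fun t : ℝ => Mfun (W + t • Matrix.single l k (1 : ℝ)) i j)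
        ((P l k •
            (Matrix.of (fun a _ => Z a l) -
              Matrix.of (fun _ _ => (1 : ℝ)) * Matrix.diagonal (fun a => Z a l) +
              pv l •
                ((1 - Z +
                    Matrix.of (fun _ _ => (1 : ℝ)) * Matrix.diagonal (fun a => Z a a)) *
                  Matrix.diagonal (fun a => (pv a)⁻¹))) :
            Matrix (Fin n) (Fin n) ℝ) i j)
        0 := by
  intro W l k i j
  set E : Matrix (Fin n) (Fin n) ℝ := Matrix.single l k (1 : ℝ) with hEdef
  set Pi : Matrix (Fin n) (Fin n) ℝ := Matrix.of (fun _ j => pv j) with hPidef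
  set G : Matrix (Fin n) (Fin n) ℝ :=
    1 - Z + Matrix.of (fun _ _ => (1 : ℝ)) * Matrix.diagonal (fun a => Z a a) with hGdef
  have hpvj : pv j ≠ 0 := (hpipos j).ne'
  -- entrywise formula for Mfun
  have hentry : ∀ (W' : Matrix (Fin n) (Fin n) ℝ) (i' j' : Fin n),
      Mfun W' i' j' =
        ((Z * Matrix.hadamard P W' * Pi) i' j' - (Z * Matrix.hadamard P W' * Pi) j' j'
          + (∑ a, ∑ b, pv a * (P a b * W' a b)) * G i' j') * (pv j')⁻¹ := by
    intro W' i' j'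
    rw [hMfun W' _ rfl]
    simp [Matrix.mul_apply, Matrix.diagonal_apply, Matrix.sub_apply, Matrix.add_apply,
      Matrix.smul_apply, Finset.sum_ite_eq, Finset.mul_sum, hGdef, mul_add, mul_sub]
  -- hadamard split
  have hHad : ∀ t : ℝ, Matrix.hadamard P (W + t • E)
      = Matrix.hadamard P W + (t * P l k) • E := by
    intro t
    ext a b
    simp only [Matrix.hadamard_apply, Matrix.add_apply, Matrix.smul_apply, hEdef,
      Matrix.single, Matrix.of_apply, smul_eq_mul]
    by_cases h : l = a ∧ k = b
    · obtain ⟨h1, h2⟩ := h; subst h1; subst h2; simp; ring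
    · simp [h]
  -- A affine in t
  have hA : ∀ (t : ℝ) (i' j' : Fin n),
      (Z * Matrix.hadamard P (W + t • E) * Pi) i' j'
        = (Z * Matrix.hadamard P W * Pi) i' j' + t * (P l k * (Z i' l * pv j')) := by
    intro t i' j'
    rw [hHad t, Matrix.mul_add, Matrix.add_mul, Matrix.mul_smul, Matrix.smul_mul]
    have : (Z * E * Pi) i' j' = Z i' l * pv j' := by
      simp [Matrix.mul_apply, hEdef, Matrix.single, Matrix.of_apply, hPidef,
        ite_and, Finset.sum_ite_eq, ite_mul, Finset.mul_sum]
    simp [this, Matrix.add_apply, Matrix.smul_apply, smul_eq_mul]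
    ring
  -- scalar affine in t
  have hs : ∀ t : ℝ,
      (∑ a, ∑ b, pv a * (P a b * (W + t • E) a b))
        = (∑ a, ∑ b, pv a * (P a b * W a b)) + t * (pv l * P l k) := by
    intro t
    have : ∀ a b : Fin n, pv a * (P a b * (W + t • E) a b)
        = pv a * (P a b * W a b) + (if l = a ∧ k = b then t * (pv l * P l k) else 0) := by
      intro a b
      by_cases h : l = a ∧ k = b
      · obtain ⟨h1, h2⟩ := h; subst h1; subst h2
        simp [hEdef, Matrix.add_apply, Matrix.smul_apply, Matrix.single]; ring
      · simp [hEdef, Matrix.add_apply, Matrix.smul_apply, Matrix.single, h]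
    simp only [this, Finset.sum_add_distrib]
    congr 1
    simp [ite_and, Finset.sum_ite_eq]
  -- assemble
  have key : ∀ t : ℝ, Mfun (W + t • E) i j
      = Mfun W i j + t * (P l k * (Z i l - Z j l + pv l * (G i j * (pv j)⁻¹))) := by
    intro t
    rw [hentry (W + t • E) i j, hentry W i j, hA t i j, hA t j j, hs t]
    field_simp
    ring
  have hd : ((P l k •
            (Matrix.of (fun a _ => Z a l) -
              Matrix.of (fun _ _ => (1 : ℝ)) * Matrix.diagonal (fun a => Z a l) +
              pv l • (G * Matrix.diagonal (fun a => (pv a)⁻¹)))) :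
            Matrix (Fin n) (Fin n) ℝ) i j
      = P l k * (Z i l - Z j l + pv l * (G i j * (pv j)⁻¹)) := by
    simp [Matrix.smul_apply, Matrix.add_apply, Matrix.sub_apply, Matrix.mul_apply,
      Matrix.diagonal_apply, Finset.sum_ite_eq, smul_eq_mul]
  have hfun : (fun t : ℝ => Mfun (W + t • E) i j)
      = fun t : ℝ => Mfun W i j + t * (P l k * (Z i l - Z j l + pv l * (G i j * (pv j)⁻¹))) :=
    funext key
  rw [hfun, ← hGdef] at *
  rw [show ((P l k •
            (Matrix.of (fun a _ => Z a l) -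
              Matrix.of (fun _ _ => (1 : ℝ)) * Matrix.diagonal (fun a => Z a l) +
              pv l • (G * Matrix.diagonal (fun a => (pv a)⁻¹)))) :
            Matrix (Fin n) (Fin n) ℝ) i j
      = P l k * (Z i l - Z j l + pv l * (G i j * (pv j)⁻¹)) from hd]
  exact (hasDerivAt_mul_const _).const_add _
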